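/- arXiv:1902.05451 — 3 statements merged into one kernel-verified Lean document; each statement's English description precedes it below -/
import Mathlib

section
/- Under the assumptions that Ω ⊆ ℝ^d is bounded, ϱ is a Borel probability measure, and f, g are continuous on the closure of Ω with f, g ∈ L^∞(Ω,ϱ), for all p, q ≥ 1 one has W_p(f_*ϱ, g_*ϱ) ≤ C(p,q) · ‖f−g‖_∞^{p/(q+p)} · ‖f−g‖_q^{q/(q+p)} for a constant C(p,q) depending only on p and q. -/
open MeasureTheory ENNReal

/-- The `p`-Wasserstein distance between two measures on `ℝ`. -/
noncomputable def Wp (p : ℝ) (μ ν : Measure ℝ) : ℝ≥0∞ :=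
  ⨅ γ ∈ {γ : Measure (ℝ × ℝ) | γ.map Prod.fst = μ ∧ γ.map Prod.snd = ν},
    (∫⁻ z, ENNReal.ofReal (|z.1 - z.2| ^ p) ∂γ) ^ (1 / p)

/-- Interpolation inequality for `eLpNorm` on a probability space. -/
lemma eLpNorm_interp {α : Type*} [MeasurableSpace α] (μ : Measure α)
    [IsProbabilityMeasure μ] (p q : ℝ) (hp : 1 ≤ p) (hq : 1 ≤ q)
    (h : α → ℝ) (hm : Measurable h) (htop : eLpNorm h ⊤ μ < ⊤) :
    eLpNorm h (ENNReal.ofReal p) μ ≤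
      (eLpNorm h ⊤ μ) ^ (p / (q + p)) * (eLpNorm h (ENNReal.ofReal q) μ) ^ (q / (q + p)) := by
  have hp0 : (0:ℝ) < p := by linarith
  have hq0 : (0:ℝ) < q := by linarith
  have hqp : (0:ℝ) < q + p := by linarith
  have hsm : AEStronglyMeasurable h μ := hm.aestronglyMeasurable
  set A := eLpNorm h ⊤ μ with hA
  set B := eLpNorm h (ENNReal.ofReal q) μ with hB
  have hBA : B ≤ A := eLpNorm_le_eLpNorm_of_exponent_le le_top hsm
  have hAtop : A ≠ ⊤ := htop.ne
  have hBtop : B ≠ ⊤ := (hBA.trans_lt htop).ne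
  rcases eq_or_ne B 0 with hB0 | hB0
  · -- then h = 0 a.e., so the left side is 0
    have : h =ᵐ[μ] 0 := by
      have := (eLpNorm_eq_zero_iff hsm (ENNReal.ofReal_pos.mpr hq0).ne').mp hB0
      exact this
    have : eLpNorm h (ENNReal.ofReal p) μ = 0 := by
      rw [eLpNorm_congr_ae this]; simp
    simp [this]
  have hA0 : A ≠ 0 := fun h0 => hB0 (le_antisymm (h0 ▸ hBA) (zero_le'))
  rcases le_or_gt p q with hple | hlt
  · -- p ≤ q : monotonicity of exponents
    have h1 : eLpNorm h (ENNReal.ofReal p) μ ≤ B :=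
      eLpNorm_le_eLpNorm_of_exponent_le (ENNReal.ofReal_le_ofReal hple) hsm
    have h2 : B = B ^ (p / (q + p)) * B ^ (q / (q + p)) := by
      rw [← ENNReal.rpow_add _ _ hB0 hBtop]
      rw [show p / (q + p) + q / (q + p) = 1 by field_simp; ring]
      simp
    calc eLpNorm h (ENNReal.ofReal p) μ ≤ B := h1
      _ = B ^ (p / (q + p)) * B ^ (q / (q + p)) := h2
      _ ≤ A ^ (p / (q + p)) * B ^ (q / (q + p)) := by
          gcongr
  · -- q < p : pointwise bound ‖h‖ₑ^p ≤ A^(p-q) ‖h‖ₑ^q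
    have hIq : B = (∫⁻ x, (‖h x‖₊ : ℝ≥0∞) ^ q ∂μ) ^ (1 / q) := by
      rw [hB, eLpNorm_eq_lintegral_rpow_enorm_toReal (ENNReal.ofReal_pos.mpr hq0).ne'
        ENNReal.ofReal_ne_top, ENNReal.toReal_ofReal hq0.le]
      simp only [enorm_eq_nnnorm]
    have hIp : eLpNorm h (ENNReal.ofReal p) μ
        = (∫⁻ x, (‖h x‖₊ : ℝ≥0∞) ^ p ∂μ) ^ (1 / p) := by
      rw [eLpNorm_eq_lintegral_rpow_enorm_toReal (ENNReal.ofReal_pos.mpr hp0).ne'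
        ENNReal.ofReal_ne_top, ENNReal.toReal_ofReal hp0.le]
      simp only [enorm_eq_nnnorm]
    have hpt : ∀ᵐ x ∂μ, (‖h x‖₊ : ℝ≥0∞) ^ p ≤ A ^ (p - q) * (‖h x‖₊ : ℝ≥0∞) ^ q := by
      filter_upwards [ae_le_eLpNormEssSup (f := h) (μ := μ)] with x hx
      have hx' : (‖h x‖₊ : ℝ≥0∞) ≤ A := by rw [hA, eLpNorm_exponent_top]; exact hx
      calc (‖h x‖₊ : ℝ≥0∞) ^ p = (‖h x‖₊ : ℝ≥0∞) ^ (p - q) * (‖h x‖₊ : ℝ≥0∞) ^ q := by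
            rcases eq_or_ne (‖h x‖₊ : ℝ≥0∞) 0 with h0 | h0
            · rw [h0]
              rw [ENNReal.zero_rpow_of_pos hp0, ENNReal.zero_rpow_of_pos (by linarith),
                ENNReal.zero_rpow_of_pos hq0, mul_zero]
            · rw [← ENNReal.rpow_add _ _ h0 ENNReal.coe_ne_top]; ring_nf
        _ ≤ A ^ (p - q) * (‖h x‖₊ : ℝ≥0∞) ^ q :=
            mul_le_mul' (ENNReal.rpow_le_rpow hx' (by linarith)) le_rfl
    have hint : (∫⁻ x, (‖h x‖₊ : ℝ≥0∞) ^ p ∂μ)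
        ≤ A ^ (p - q) * ∫⁻ x, (‖h x‖₊ : ℝ≥0∞) ^ q ∂μ := by
      rw [← lintegral_const_mul' _ _ (ENNReal.rpow_ne_top_of_nonneg (by linarith) hAtop)]
      exact lintegral_mono_ae hpt
    have step1 : eLpNorm h (ENNReal.ofReal p) μ ≤ A ^ ((p - q) / p) * B ^ (q / p) := by
      rw [hIp]
      calc (∫⁻ x, (‖h x‖₊ : ℝ≥0∞) ^ p ∂μ) ^ (1 / p)
          ≤ (A ^ (p - q) * ∫⁻ x, (‖h x‖₊ : ℝ≥0∞) ^ q ∂μ) ^ (1 / p) := by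
            exact ENNReal.rpow_le_rpow hint (by positivity)
        _ = A ^ ((p - q) / p) * B ^ (q / p) := by
            rw [ENNReal.mul_rpow_of_nonneg _ _ (by positivity), ← ENNReal.rpow_mul,
              hIq, ← ENNReal.rpow_mul]
            congr 1
            · congr 1; field_simp
            · congr 1; field_simp
    -- now convert exponents using B ≤ A
    have e1 : (0:ℝ) ≤ q / p - q / (q + p) := by
      rw [sub_nonneg, div_le_div_iff₀ hqp hp0]
      nlinarith
    have step2 : A ^ ((p - q) / p) * B ^ (q / p)
        ≤ A ^ (p / (q + p)) * B ^ (q / (q + p)) := by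
      have hBsplit : B ^ (q / p) = B ^ (q / p - q / (q + p)) * B ^ (q / (q + p)) := by
        rw [← ENNReal.rpow_add _ _ hB0 hBtop]; ring_nf
      have hBA' : B ^ (q / p - q / (q + p)) ≤ A ^ (q / p - q / (q + p)) :=
        ENNReal.rpow_le_rpow hBA e1
      have e2 : A ^ ((p - q) / p) * A ^ (q / p - q / (q + p)) = A ^ (p / (q + p)) := by
        rw [← ENNReal.rpow_add _ _ hA0 hAtop]
        congr 1
        field_simp
        ring
      calc A ^ ((p - q) / p) * B ^ (q / p)
          = A ^ ((p - q) / p) * (B ^ (q / p - q / (q + p)) * B ^ (q / (q + p))) := by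
            rw [hBsplit]
        _ ≤ A ^ ((p - q) / p) * (A ^ (q / p - q / (q + p)) * B ^ (q / (q + p))) := by
            exact mul_le_mul' le_rfl (mul_le_mul' hBA' le_rfl)
        _ = A ^ (p / (q + p)) * B ^ (q / (q + p)) := by rw [← mul_assoc, e2]
    exact step1.trans step2

/-- Interpolation bound: `W_p(f_*ϱ, g_*ϱ) ≤ C(p,q) ‖f-g‖_∞^{p/(q+p)} ‖f-g‖_q^{q/(q+p)}`,
with a constant depending only on `p` and `q`. -/
theorem wasserstein_interpolation (p q : ℝ) (hp : 1 ≤ p) (hq : 1 ≤ q) :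
    ∃ C : ℝ, 0 < C ∧
      ∀ (d : ℕ) (Ω : Set (EuclideanSpace ℝ (Fin d))), MeasurableSet Ω →
        Bornology.IsBounded Ω →
        ∀ (ϱ : Measure (EuclideanSpace ℝ (Fin d))), IsProbabilityMeasure ϱ →
          ϱ Ωᶜ = 0 →
          ∀ (f g : EuclideanSpace ℝ (Fin d) → ℝ), Measurable f → Measurable g →
            ContinuousOn f (closure Ω) → ContinuousOn g (closure Ω) →
            eLpNorm f ⊤ ϱ < ⊤ → eLpNorm g ⊤ ϱ < ⊤ →
            Wp p (ϱ.map f) (ϱ.map g) ≤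
              ENNReal.ofReal C * (eLpNorm (f - g) ⊤ ϱ) ^ (p / (q + p)) *
                (eLpNorm (f - g) (ENNReal.ofReal q) ϱ) ^ (q / (q + p)) := by
  refine ⟨1, one_pos, ?_⟩
  intro d Ω hΩmeas hΩbd ϱ hprob hϱΩ f g hf hg hfc hgc hftop hgtop
  have hp0 : (0:ℝ) < p := by linarith
  -- the coupling
  set γ : Measure (ℝ × ℝ) := ϱ.map (fun x => (f x, g x)) with hγ
  have hfg : Measurable fun x => (f x, g x) := hf.prodMk hg
  have hmem : γ ∈ {γ : Measure (ℝ × ℝ) | γ.map Prod.fst = ϱ.map f ∧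
      γ.map Prod.snd = ϱ.map g} := by
    constructor
    · rw [hγ, Measure.map_map measurable_fst hfg]; rfl
    · rw [hγ, Measure.map_map measurable_snd hfg]; rfl
  have hWle : Wp p (ϱ.map f) (ϱ.map g) ≤
      (∫⁻ z, ENNReal.ofReal (|z.1 - z.2| ^ p) ∂γ) ^ (1 / p) := by
    exact iInf₂_le γ hmem
  have hsub : Measurable (f - g) := hf.sub hg
  have hsubtop : eLpNorm (f - g) ⊤ ϱ < ⊤ := by
    calc eLpNorm (f - g) ⊤ ϱ ≤ eLpNorm f ⊤ ϱ + eLpNorm g ⊤ ϱ :=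
          eLpNorm_sub_le hf.aestronglyMeasurable hg.aestronglyMeasurable le_top
      _ < ⊤ := ENNReal.add_lt_top.mpr ⟨hftop, hgtop⟩
  -- rewrite the integral as an eLpNorm
  have hkey : (∫⁻ z, ENNReal.ofReal (|z.1 - z.2| ^ p) ∂γ) ^ (1 / p)
      = eLpNorm (f - g) (ENNReal.ofReal p) ϱ := by
    rw [hγ, lintegral_map (by measurability) hfg,
      eLpNorm_eq_lintegral_rpow_enorm_toReal (ENNReal.ofReal_pos.mpr hp0).ne' ENNReal.ofReal_ne_top,
      ENNReal.toReal_ofReal hp0.le]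
    congr 1
    refine lintegral_congr fun x => ?_
    rw [Pi.sub_apply, Real.enorm_eq_ofReal_abs,
      ← ENNReal.ofReal_rpow_of_nonneg (abs_nonneg _) hp0.le]
  rw [ENNReal.ofReal_one, one_mul]
  calc Wp p (ϱ.map f) (ϱ.map g)
      ≤ eLpNorm (f - g) (ENNReal.ofReal p) ϱ := hkey ▸ hWle
    _ ≤ (eLpNorm (f - g) ⊤ ϱ) ^ (p / (q + p)) *
        (eLpNorm (f - g) (ENNReal.ofReal q) ϱ) ^ (q / (q + p)) :=
      eLpNorm_interp ϱ p q hp hq (f - g) hsub hsubtop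
end

section
/- If f, g are continuous on the closure of a bounded set Ω ⊆ ℝ^d, ϱ is a Borel probability measure on Ω, and f ≥ g holds ϱ-almost everywhere, then W_1(f_*ϱ, g_*ϱ) = ‖f − g‖_{L^1(Ω,ϱ)}. -/
open MeasureTheory ENNReal

/-- If `f ≥ g` holds `ϱ`-a.e., then `W₁(f_*ϱ, g_*ϱ) = ‖f − g‖_{L¹(Ω,ϱ)}`. -/
theorem wasserstein_eq_l1_of_ae_le {d : ℕ} (Ω : Set (EuclideanSpace ℝ (Fin d)))
    (hΩ : MeasurableSet Ω) (hbdd : Bornology.IsBounded Ω)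
    (ϱ : Measure (EuclideanSpace ℝ (Fin d)))
    [IsProbabilityMeasure ϱ] (hsupp : ϱ Ωᶜ = 0)
    (f g : EuclideanSpace ℝ (Fin d) → ℝ)
    (hfm : Measurable f) (hgm : Measurable g)
    (hf : ContinuousOn f (closure Ω)) (hg : ContinuousOn g (closure Ω))
    (hge : ∀ᵐ α ∂ϱ, g α ≤ f α) :
    Wp 1 (ϱ.map f) (ϱ.map g) = eLpNorm (f - g) 1 ϱ := by
  have hΩae : ∀ᵐ x ∂ϱ, x ∈ Ω := by
    rw [ae_iff]; exact hsupp
  have hcpt : IsCompact (closure Ω) := hbdd.isCompact_closure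
  obtain ⟨Cf, hCf⟩ := hcpt.exists_bound_of_continuousOn hf
  obtain ⟨Cg, hCg⟩ := hcpt.exists_bound_of_continuousOn hg
  have hfb : ∀ᵐ x ∂ϱ, ‖f x‖ ≤ Cf := hΩae.mono fun x hx => hCf x (subset_closure hx)
  have hgb : ∀ᵐ x ∂ϱ, ‖g x‖ ≤ Cg := hΩae.mono fun x hx => hCg x (subset_closure hx)
  have hfi : Integrable f ϱ := ⟨hfm.aestronglyMeasurable, HasFiniteIntegral.of_bounded hfb⟩
  have hgi : Integrable g ϱ := ⟨hgm.aestronglyMeasurable, HasFiniteIntegral.of_bounded hgb⟩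
  have habs_nonneg : (0 : EuclideanSpace ℝ (Fin d) → ℝ) ≤ᵐ[ϱ] fun x => |f x - g x| :=
    Filter.Eventually.of_forall fun x => abs_nonneg _
  have hor := ofReal_integral_eq_lintegral_ofReal (hfi.sub hgi).abs habs_nonneg
  simp only [Pi.sub_apply] at hor
  have hlhs : eLpNorm (f - g) 1 ϱ = ENNReal.ofReal (∫ x, |f x - g x| ∂ϱ) := by
    rw [eLpNorm_one_eq_lintegral_enorm]
    simp only [← ofReal_norm_eq_enorm, Real.norm_eq_abs, Pi.sub_apply]
    exact hor.symm
  rw [Wp, hlhs]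
  apply le_antisymm
  · -- upper bound: use the coupling (f, g)_* ϱ
    have hfg : Measurable fun x => (f x, g x) := hfm.prodMk hgm
    have hmem : ϱ.map (fun x => (f x, g x)) ∈
        {γ : Measure (ℝ × ℝ) | γ.map Prod.fst = ϱ.map f ∧ γ.map Prod.snd = ϱ.map g} := by
      constructor
      · rw [Measure.map_map measurable_fst hfg]; rfl
      · rw [Measure.map_map measurable_snd hfg]; rfl
    refine iInf₂_le_of_le _ hmem (le_of_eq ?_)
    have hmeas : Measurable fun z : ℝ × ℝ => ENNReal.ofReal (|z.1 - z.2| ^ (1 : ℝ)) := by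
      apply Measurable.ennreal_ofReal
      exact ((measurable_fst.sub measurable_snd).abs).pow_const _
    rw [lintegral_map hmeas hfg]
    simp only [Real.rpow_one, one_div_one, ENNReal.rpow_one]
    exact hor.symm
  · -- lower bound
    refine le_iInf₂ fun γ hγ => ?_
    obtain ⟨h1, h2⟩ := hγ
    haveI : IsProbabilityMeasure γ := by
      constructor
      have := congrArg (fun μ : Measure ℝ => μ Set.univ) h1
      simpa [Measure.map_apply measurable_fst MeasurableSet.univ,
        Measure.map_apply hfm MeasurableSet.univ] using this
    have hb1 : ∀ᵐ z ∂γ, ‖(z : ℝ × ℝ).1‖ ≤ Cf := by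
      rw [ae_iff]
      have hs : MeasurableSet {y : ℝ | Cf < ‖y‖} :=
        (isOpen_lt continuous_const continuous_norm).measurableSet
      have hset : {z : ℝ × ℝ | ¬ ‖z.1‖ ≤ Cf} = Prod.fst ⁻¹' {y : ℝ | Cf < ‖y‖} := by
        ext z; simp [not_le]
      rw [hset, ← Measure.map_apply measurable_fst hs, h1, Measure.map_apply hfm hs]
      have : {x | Cf < ‖f x‖} = {x | ¬ ‖f x‖ ≤ Cf} := by ext x; simp [not_le]
      rw [show f ⁻¹' {y : ℝ | Cf < ‖y‖} = {x | ¬ ‖f x‖ ≤ Cf} by ext x; simp [not_le]]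
      exact ae_iff.mp hfb
    have hb2 : ∀ᵐ z ∂γ, ‖(z : ℝ × ℝ).2‖ ≤ Cg := by
      rw [ae_iff]
      have hs : MeasurableSet {y : ℝ | Cg < ‖y‖} :=
        (isOpen_lt continuous_const continuous_norm).measurableSet
      have hset : {z : ℝ × ℝ | ¬ ‖z.2‖ ≤ Cg} = Prod.snd ⁻¹' {y : ℝ | Cg < ‖y‖} := by
        ext z; simp [not_le]
      rw [hset, ← Measure.map_apply measurable_snd hs, h2, Measure.map_apply hgm hs]
      rw [show g ⁻¹' {y : ℝ | Cg < ‖y‖} = {x | ¬ ‖g x‖ ≤ Cg} by ext x; simp [not_le]]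
      exact ae_iff.mp hgb
    have hint1 : Integrable (fun z : ℝ × ℝ => z.1) γ :=
      ⟨measurable_fst.aestronglyMeasurable, HasFiniteIntegral.of_bounded hb1⟩
    have hint2 : Integrable (fun z : ℝ × ℝ => z.2) γ :=
      ⟨measurable_snd.aestronglyMeasurable, HasFiniteIntegral.of_bounded hb2⟩
    have hintsub := hint1.sub hint2
    have hintabs := hintsub.abs
    have key : ∫ x, |f x - g x| ∂ϱ ≤ ∫ z : ℝ × ℝ, |z.1 - z.2| ∂γ := by
      have e1 : ∫ x, |f x - g x| ∂ϱ = ∫ x, (f x - g x) ∂ϱ :=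
        integral_congr_ae (hge.mono fun x hx => abs_of_nonneg (sub_nonneg.2 hx))
      have efst : ∫ z : ℝ × ℝ, z.1 ∂γ = ∫ x, f x ∂ϱ := by
        calc ∫ z : ℝ × ℝ, z.1 ∂γ = ∫ y, y ∂(γ.map Prod.fst) :=
              (integral_map measurable_fst.aemeasurable aestronglyMeasurable_id).symm
          _ = ∫ y, y ∂(ϱ.map f) := by rw [h1]
          _ = ∫ x, f x ∂ϱ := integral_map hfm.aemeasurable aestronglyMeasurable_id
      have esnd : ∫ z : ℝ × ℝ, z.2 ∂γ = ∫ x, g x ∂ϱ := by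
        calc ∫ z : ℝ × ℝ, z.2 ∂γ = ∫ y, y ∂(γ.map Prod.snd) :=
              (integral_map measurable_snd.aemeasurable aestronglyMeasurable_id).symm
          _ = ∫ y, y ∂(ϱ.map g) := by rw [h2]
          _ = ∫ x, g x ∂ϱ := integral_map hgm.aemeasurable aestronglyMeasurable_id
      have e2 : ∫ z : ℝ × ℝ, (z.1 - z.2) ∂γ = ∫ x, (f x - g x) ∂ϱ := by
        rw [integral_sub hint1 hint2, integral_sub hfi hgi, efst, esnd]
      rw [e1, ← e2]
      exact integral_mono hintsub hintabs fun z => le_abs_self _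
    have costeq : (∫⁻ z : ℝ × ℝ, ENNReal.ofReal (|z.1 - z.2| ^ (1 : ℝ)) ∂γ) ^ (1 / (1 : ℝ))
        = ENNReal.ofReal (∫ z : ℝ × ℝ, |z.1 - z.2| ∂γ) := by
      simp only [Real.rpow_one, one_div_one, ENNReal.rpow_one]
      exact (ofReal_integral_eq_lintegral_ofReal hintabs
        (Filter.Eventually.of_forall fun z => abs_nonneg _)).symm
    rw [costeq]
    exact ENNReal.ofReal_le_ofReal key
end

section
/- Let I be a closed bounded interval with probability measure dϱ = r(α)dα where r is bounded and continuous, and let f, g ∈ C¹(I) be strictly monotonically decreasing with |f'|, |g'| ≥ τ > 0. Then for every k ∈ ℕ, W_2(f_*ϱ, g_*ϱ) ≥ A_k |E_ϱ[f^k] − E_ϱ[g^k]|, where A_k = (√(2k−1)/k)(M^{2k−1} − m^{2k−1})^{−1/2} τ^{1/2} ‖r‖_∞^{−1/2}, M = max over I of max(f,g) and m = min over I of min(f,g). -/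
open MeasureTheory ENNReal

section AuxLemmas

open Set Finset


lemma pair_bound (i j : ℕ) (A B : ℝ) (hA : 0 ≤ A) (hB : 0 ≤ B) :
    A ^ i * B ^ j + A ^ j * B ^ i ≤ A ^ (i + j) + B ^ (i + j) := by
  rcases le_total A B with h | h
  · nlinarith [mul_nonneg (sub_nonneg.2 (pow_le_pow_left₀ hA h i))
      (sub_nonneg.2 (pow_le_pow_left₀ hA h j)), pow_add A i j, pow_add B i j]
  · nlinarith [mul_nonneg (sub_nonneg.2 (pow_le_pow_left₀ hB h i))
      (sub_nonneg.2 (pow_le_pow_left₀ hB h j)), pow_add A i j, pow_add B i j]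

lemma sum_sq_bound (k : ℕ) (hk : 1 ≤ k) (x y : ℝ) :
    (∑ i ∈ Finset.range k, x ^ i * y ^ (k - 1 - i)) ^ 2 ≤
      (k : ℝ) ^ 2 / 2 * (x ^ (2 * k - 2) + y ^ (2 * k - 2)) := by
  set A := |x| with hA
  set B := |y| with hB
  have hA0 : 0 ≤ A := abs_nonneg x
  have hB0 : 0 ≤ B := abs_nonneg y
  have habs : |∑ i ∈ Finset.range k, x ^ i * y ^ (k - 1 - i)| ≤
      ∑ i ∈ Finset.range k, A ^ i * B ^ (k - 1 - i) := by
    refine (Finset.abs_sum_le_sum_abs _ _).trans_eq ?_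
    exact Finset.sum_congr rfl fun i _ => by rw [abs_mul, abs_pow, abs_pow]
  have hsum2 : 2 * ∑ i ∈ Finset.range k, A ^ i * B ^ (k - 1 - i) ≤
      (k : ℝ) * (A ^ (k - 1) + B ^ (k - 1)) := by
    have hrefl : ∑ i ∈ Finset.range k, A ^ i * B ^ (k - 1 - i) =
        ∑ i ∈ Finset.range k, A ^ (k - 1 - i) * B ^ i := by
      rw [← Finset.sum_range_reflect (fun i => A ^ i * B ^ (k - 1 - i)) k]
      refine Finset.sum_congr rfl fun i hi => ?_
      have hi' : i < k := Finset.mem_range.1 hi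
      have he : k - 1 - (k - 1 - i) = i := by omega
      rw [he]
    have : 2 * ∑ i ∈ Finset.range k, A ^ i * B ^ (k - 1 - i) =
        ∑ i ∈ Finset.range k, (A ^ i * B ^ (k - 1 - i) + A ^ (k - 1 - i) * B ^ i) := by
      rw [Finset.sum_add_distrib, ← hrefl]; ring
    rw [this]
    calc ∑ i ∈ Finset.range k, (A ^ i * B ^ (k - 1 - i) + A ^ (k - 1 - i) * B ^ i)
        ≤ ∑ _i ∈ Finset.range k, (A ^ (k - 1) + B ^ (k - 1)) := by
          refine Finset.sum_le_sum fun i hi => ?_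
          have hi' : i < k := Finset.mem_range.1 hi
          have h := pair_bound i (k - 1 - i) A B hA0 hB0
          have he : i + (k - 1 - i) = k - 1 := by omega
          rw [he] at h
          exact h
      _ = (k : ℝ) * (A ^ (k - 1) + B ^ (k - 1)) := by
          rw [Finset.sum_const, Finset.card_range, nsmul_eq_mul]
  have hS0 : 0 ≤ ∑ i ∈ Finset.range k, A ^ i * B ^ (k - 1 - i) :=
    Finset.sum_nonneg fun i _ => mul_nonneg (pow_nonneg hA0 _) (pow_nonneg hB0 _)
  have hsq : (∑ i ∈ Finset.range k, x ^ i * y ^ (k - 1 - i)) ^ 2 ≤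
      (∑ i ∈ Finset.range k, A ^ i * B ^ (k - 1 - i)) ^ 2 := by
    rw [← sq_abs]
    exact pow_le_pow_left₀ (abs_nonneg _) habs 2
  have hev : Even (2 * k - 2) := ⟨k - 1, by omega⟩
  have he2 : k - 1 + (k - 1) = 2 * k - 2 := by omega
  have hApow : A ^ (k - 1) * A ^ (k - 1) = x ^ (2 * k - 2) := by
    rw [← pow_add, he2, hA, pow_abs, abs_of_nonneg (hev.pow_nonneg x)]
  have hBpow : B ^ (k - 1) * B ^ (k - 1) = y ^ (2 * k - 2) := by
    rw [← pow_add, he2, hB, pow_abs, abs_of_nonneg (hev.pow_nonneg y)]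
  nlinarith [sq_nonneg (A ^ (k - 1) - B ^ (k - 1)), pow_nonneg hA0 (k-1), pow_nonneg hB0 (k-1)]


lemma derivWithin_le_neg (a b τ : ℝ) (f : ℝ → ℝ) (hab : a < b)
    (hdiff : DifferentiableOn ℝ f (Set.Icc a b)) (hanti : StrictAntiOn f (Set.Icc a b))
    (hτ : 0 < τ) (hf' : ∀ x ∈ Set.Icc a b, τ ≤ |derivWithin f (Set.Icc a b) x|) :
    ∀ x ∈ Set.Icc a b, derivWithin f (Set.Icc a b) x ≤ -τ := by
  intro x hx
  set d := derivWithin f (Set.Icc a b) x with hd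
  suffices h0 : d ≤ 0 by
    have := hf' x hx
    rw [abs_of_nonpos h0] at this
    linarith
  have hder : HasDerivWithinAt f d (Set.Icc a b) x := (hdiff x hx).hasDerivWithinAt
  have htd : Filter.Tendsto (slope f x) (nhdsWithin x (Set.Icc a b \ {x})) (nhds d) :=
    hasDerivWithinAt_iff_tendsto_slope.1 hder
  rcases lt_or_eq_of_le hx.2 with hxb | hxb
  · have hsub : Set.Ioo x b ⊆ Set.Icc a b \ {x} := fun y hy =>
      ⟨⟨hx.1.trans hy.1.le, hy.2.le⟩, ne_of_gt hy.1⟩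
    have hne : (nhdsWithin x (Set.Ioo x b)).NeBot := by
      refine mem_closure_iff_nhdsWithin_neBot.1 ?_
      rw [closure_Ioo (ne_of_lt hxb)]
      exact ⟨le_rfl, hxb.le⟩
    refine le_of_tendsto (htd.mono_left (nhdsWithin_mono x hsub)) ?_
    refine eventually_nhdsWithin_of_forall fun y hy => ?_
    rw [slope_def_field]
    apply div_nonpos_of_nonpos_of_nonneg
    · have : f y < f x := hanti hx ⟨hx.1.trans hy.1.le, hy.2.le⟩ hy.1
      linarith
    · linarith [hy.1]
  · have hxa : a < x := by rw [hxb]; exact hab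
    have hsub : Set.Ioo a x ⊆ Set.Icc a b \ {x} := fun y hy =>
      ⟨⟨hy.1.le, hy.2.le.trans hx.2⟩, ne_of_lt hy.2⟩
    have hne : (nhdsWithin x (Set.Ioo a x)).NeBot := by
      refine mem_closure_iff_nhdsWithin_neBot.1 ?_
      rw [closure_Ioo (ne_of_lt hxa)]
      exact ⟨hxa.le, le_rfl⟩
    refine le_of_tendsto (htd.mono_left (nhdsWithin_mono x hsub)) ?_
    refine eventually_nhdsWithin_of_forall fun y hy => ?_
    rw [slope_def_field]
    apply div_nonpos_of_nonneg_of_nonpos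
    · have : f x < f y := hanti ⟨hy.1.le, hy.2.le.trans hx.2⟩ hx hy.2
      linarith
    · linarith [hy.2]

lemma rho_compl (a b : ℝ) (r : ℝ → ℝ) (ϱ : Measure ℝ)
    (hϱ : ϱ = (volume.restrict (Set.Icc a b)).withDensity (fun α => ENNReal.ofReal (r α))) :
    ϱ ((Set.Icc a b)ᶜ) = 0 := by
  rw [hϱ]
  refine withDensity_absolutelyContinuous (volume.restrict (Set.Icc a b)) _ ?_
  rw [Measure.restrict_apply measurableSet_Icc.compl]
  simp

lemma integral_density (a b : ℝ) (hab : a < b) (r : ℝ → ℝ)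
    (hr : ContinuousOn r (Set.Icc a b)) (hr0 : ∀ x ∈ Set.Icc a b, 0 ≤ r x)
    (ϱ : Measure ℝ)
    (hϱ : ϱ = (volume.restrict (Set.Icc a b)).withDensity (fun α => ENNReal.ofReal (r α)))
    (φ : ℝ → ℝ) :
    ∫ α, φ α ∂ϱ = ∫ x in a..b, φ x * r x := by
  have hrm : AEMeasurable (fun α => Real.toNNReal (r α)) (volume.restrict (Set.Icc a b)) :=
    measurable_real_toNNReal.comp_aemeasurable (hr.aemeasurable measurableSet_Icc)
  rw [hϱ]
  have hd : (fun α => ENNReal.ofReal (r α)) =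
      fun α => ((fun β => Real.toNNReal (r β)) α : ℝ≥0∞) := rfl
  rw [hd, integral_withDensity_eq_integral_smul₀ hrm]
  rw [intervalIntegral.integral_of_le hab.le, ← integral_Icc_eq_integral_Ioc]
  refine integral_congr_ae ?_
  filter_upwards [ae_restrict_mem measurableSet_Icc] with α hα
  rw [NNReal.smul_def, Real.coe_toNNReal _ (hr0 α hα)]
  rw [smul_eq_mul]; ring

lemma moment_bound (a b : ℝ) (hab : a < b) (r : ℝ → ℝ)
    (hr : ContinuousOn r (Set.Icc a b)) (hr0 : ∀ x ∈ Set.Icc a b, 0 ≤ r x)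
    (ϱ : Measure ℝ)
    (hϱ : ϱ = (volume.restrict (Set.Icc a b)).withDensity (fun α => ENNReal.ofReal (r α)))
    (f : ℝ → ℝ) (hf : ContDiffOn ℝ 1 f (Set.Icc a b)) (hfanti : StrictAntiOn f (Set.Icc a b))
    (τ : ℝ) (hτ : 0 < τ)
    (hf' : ∀ x ∈ Set.Icc a b, τ ≤ |derivWithin f (Set.Icc a b) x|)
    (n : ℕ) (R M m' : ℝ) (hR0 : 0 ≤ R) (hrR : ∀ x ∈ Set.Icc a b, r x ≤ R)
    (hfM : ∀ x ∈ Set.Icc a b, f x ≤ M) (hfm : ∀ x ∈ Set.Icc a b, m' ≤ f x) :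
    ∫ α, (f α) ^ (2 * n) ∂ϱ ≤ R / τ * ((M ^ (2 * n + 1) - m' ^ (2 * n + 1)) / (2 * (n : ℝ) + 1)) := by
  have hcf : ContinuousOn f (Set.Icc a b) := hf.continuousOn
  have hdiff : DifferentiableOn ℝ f (Set.Icc a b) := hf.differentiableOn one_ne_zero
  set f' := derivWithin f (Set.Icc a b) with hf'def
  have hf'c : ContinuousOn f' (Set.Icc a b) :=
    hf.continuousOn_derivWithin (uniqueDiffOn_Icc hab) le_rfl
  have hneg : ∀ x ∈ Set.Icc a b, f' x ≤ -τ :=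
    derivWithin_le_neg a b τ f hab hdiff hfanti hτ hf'
  have huIcc : Set.uIcc a b = Set.Icc a b := Set.uIcc_of_le hab.le
  have hev : Even (2 * n) := ⟨n, by omega⟩
  have step1 : ∫ α, (f α) ^ (2 * n) ∂ϱ = ∫ x in a..b, (f x) ^ (2 * n) * r x :=
    integral_density a b hab r hr hr0 ϱ hϱ _
  have hint1 : IntervalIntegrable (fun x => (f x) ^ (2 * n) * r x) volume a b := by
    apply ContinuousOn.intervalIntegrable
    rw [huIcc]
    exact (hcf.pow _).mul hr
  have hint2 : IntervalIntegrable (fun x => (-(f' x)) * ((R / τ) * (f x) ^ (2 * n)))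
      volume a b := by
    apply ContinuousOn.intervalIntegrable
    rw [huIcc]
    exact hf'c.neg.mul (continuousOn_const.mul (hcf.pow _))
  have step2 : ∫ x in a..b, (f x) ^ (2 * n) * r x ≤
      ∫ x in a..b, (-(f' x)) * ((R / τ) * (f x) ^ (2 * n)) := by
    apply intervalIntegral.integral_mono_on hab.le hint1 hint2
    intro x hx
    have h1 : (0 : ℝ) ≤ (f x) ^ (2 * n) := hev.pow_nonneg _
    have h2 := hrR x hx
    have h3 := hneg x hx
    have h5 : R ≤ (-(f' x)) * (R / τ) := by
      have h6 : τ * (R / τ) ≤ (-(f' x)) * (R / τ) :=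
        mul_le_mul_of_nonneg_right (by linarith) (div_nonneg hR0 hτ.le)
      rwa [mul_comm, div_mul_cancel₀ _ (ne_of_gt hτ)] at h6
    calc (f x) ^ (2 * n) * r x ≤ (f x) ^ (2 * n) * ((-(f' x)) * (R / τ)) :=
          mul_le_mul_of_nonneg_left (h2.trans h5) h1
      _ = (-(f' x)) * ((R / τ) * (f x) ^ (2 * n)) := by ring
  have step3 : ∫ x in a..b, (-(f' x)) * ((R / τ) * (f x) ^ (2 * n)) =
      ∫ u in f b..f a, (R / τ) * u ^ (2 * n) := by
    have hcv : (∫ x in a..b, f' x • ((fun u => (R / τ) * u ^ (2 * n)) ∘ f) x) =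
        ∫ u in f a..f b, (R / τ) * u ^ (2 * n) := by
      apply intervalIntegral.integral_comp_smul_deriv''
      · rw [huIcc]; exact hcf
      · rw [min_eq_left hab.le, max_eq_right hab.le]
        intro x hx
        have hd : HasDerivWithinAt f (f' x) (Set.Icc a b) x :=
          (hdiff x (Set.Ioo_subset_Icc_self hx)).hasDerivWithinAt
        exact (hd.hasDerivAt (Icc_mem_nhds hx.1 hx.2)).hasDerivWithinAt
      · rw [huIcc]; exact hf'c
      · exact (continuous_const.mul (continuous_pow _)).continuousOn
    rw [intervalIntegral.integral_symm (f a) (f b), ← hcv, ← intervalIntegral.integral_neg]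
    apply intervalIntegral.integral_congr
    intro x _
    simp only [Function.comp_apply, smul_eq_mul]
    ring
  have step5 : ∫ u in f b..f a, u ^ (2 * n) ≤ ∫ u in m'..M, u ^ (2 * n) := by
    apply intervalIntegral.integral_mono_interval (hfm b ⟨hab.le, le_rfl⟩)
      (hfanti ⟨le_rfl, hab.le⟩ ⟨hab.le, le_rfl⟩ hab).le (hfM a ⟨le_rfl, hab.le⟩)
    · exact Filter.Eventually.of_forall fun x => hev.pow_nonneg x
    · exact (continuous_pow _).intervalIntegrable _ _
  have step6 : ∫ u in m'..M, u ^ (2 * n) = (M ^ (2 * n + 1) - m' ^ (2 * n + 1)) / (2 * (n : ℝ) + 1) := by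
    rw [integral_pow]
    push_cast
    ring
  calc ∫ α, (f α) ^ (2 * n) ∂ϱ ≤ ∫ x in a..b, (-(f' x)) * ((R / τ) * (f x) ^ (2 * n)) := by
        rw [step1]; exact step2
    _ = (R / τ) * ∫ u in f b..f a, u ^ (2 * n) := by
        rw [step3, intervalIntegral.integral_const_mul]
    _ ≤ (R / τ) * ((M ^ (2 * n + 1) - m' ^ (2 * n + 1)) / (2 * (n : ℝ) + 1)) := by
        rw [← step6]
        exact mul_le_mul_of_nonneg_left step5 (div_nonneg hR0 hτ.le)

end AuxLemmas

/-- Lower bound on `W₂` in terms of moment differences: for `f, g` strictly decreasing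
`C¹` functions with derivatives bounded away from `0` by `τ` on a closed bounded
interval `I = [a,b]` carrying the probability measure `dϱ = r dα`,
`W₂(f_*ϱ, g_*ϱ) ≥ A_k |E_ϱ f^k − E_ϱ g^k|` with
`A_k = (√(2k−1)/k) (M^{2k−1} − m^{2k−1})^{-1/2} τ^{1/2} ‖r‖_∞^{-1/2}`. -/
theorem w2_moment_lower_bound (a b : ℝ) (hab : a < b)
    (r : ℝ → ℝ) (hr : ContinuousOn r (Set.Icc a b)) (hr0 : ∀ x ∈ Set.Icc a b, 0 ≤ r x)
    (ϱ : Measure ℝ)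
    (hϱ : ϱ = (volume.restrict (Set.Icc a b)).withDensity (fun α => ENNReal.ofReal (r α)))
    [IsProbabilityMeasure ϱ]
    (f g : ℝ → ℝ)
    (hf : ContDiffOn ℝ 1 f (Set.Icc a b)) (hg : ContDiffOn ℝ 1 g (Set.Icc a b))
    (hfanti : StrictAntiOn f (Set.Icc a b)) (hganti : StrictAntiOn g (Set.Icc a b))
    (τ : ℝ) (hτ : 0 < τ)
    (hf' : ∀ x ∈ Set.Icc a b, τ ≤ |derivWithin f (Set.Icc a b) x|)
    (hg' : ∀ x ∈ Set.Icc a b, τ ≤ |derivWithin g (Set.Icc a b) x|)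
    (k : ℕ) (hk : 1 ≤ k) :
    ENNReal.ofReal
        ((Real.sqrt ((2 * k - 1 : ℕ)) / k /
            Real.sqrt ((sSup (f '' Set.Icc a b ∪ g '' Set.Icc a b)) ^ (2 * k - 1) -
              (sInf (f '' Set.Icc a b ∪ g '' Set.Icc a b)) ^ (2 * k - 1)) *
          Real.sqrt τ / Real.sqrt (sSup (r '' Set.Icc a b))) *
          |(∫ α, f α ^ k ∂ϱ) - ∫ α, g α ^ k ∂ϱ|) ≤
      Wp 2 (ϱ.map f) (ϱ.map g) := by
  have hcf : ContinuousOn f (Set.Icc a b) := hf.continuousOn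
  have hcg : ContinuousOn g (Set.Icc a b) := hg.continuousOn
  have haI : a ∈ Set.Icc a b := ⟨le_rfl, hab.le⟩
  have hbI : b ∈ Set.Icc a b := ⟨hab.le, le_rfl⟩
  set M := sSup (f '' Set.Icc a b ∪ g '' Set.Icc a b) with hMdef
  set m := sInf (f '' Set.Icc a b ∪ g '' Set.Icc a b) with hmdef
  set R := sSup (r '' Set.Icc a b) with hRdef
  -- compactness facts
  have hKc : IsCompact (f '' Set.Icc a b ∪ g '' Set.Icc a b) :=
    (isCompact_Icc.image_of_continuousOn hcf).union (isCompact_Icc.image_of_continuousOn hcg)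
  have hfM : ∀ x ∈ Set.Icc a b, f x ≤ M := fun x hx =>
    le_csSup hKc.bddAbove (Set.mem_union_left _ (Set.mem_image_of_mem f hx))
  have hgM : ∀ x ∈ Set.Icc a b, g x ≤ M := fun x hx =>
    le_csSup hKc.bddAbove (Set.mem_union_right _ (Set.mem_image_of_mem g hx))
  have hfm : ∀ x ∈ Set.Icc a b, m ≤ f x := fun x hx =>
    csInf_le hKc.bddBelow (Set.mem_union_left _ (Set.mem_image_of_mem f hx))
  have hgm : ∀ x ∈ Set.Icc a b, m ≤ g x := fun x hx =>
    csInf_le hKc.bddBelow (Set.mem_union_right _ (Set.mem_image_of_mem g hx))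
  have hmM : m < M := ((hfm b hbI).trans_lt (hfanti haI hbI hab)).trans_le (hfM a haI)
  have hrR : ∀ x ∈ Set.Icc a b, r x ≤ R := fun x hx =>
    le_csSup (isCompact_Icc.image_of_continuousOn hr).bddAbove (Set.mem_image_of_mem r hx)
  have hR0 : 0 ≤ R := (hr0 a haI).trans (hrR a haI)
  have hcompl : ϱ ((Set.Icc a b)ᶜ) = 0 := rho_compl a b r ϱ hϱ
  have haes : ∀ᵐ α ∂ϱ, α ∈ Set.Icc a b := by
    rw [MeasureTheory.ae_iff]
    exact hcompl
  have hRpos : 0 < R := by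
    rcases lt_or_ge 0 R with h | h
    · exact h
    · exfalso
      have hz : ϱ Set.univ = 0 := by
        rw [hϱ, withDensity_apply _ MeasurableSet.univ, Measure.restrict_univ]
        have : ∀ᵐ α ∂(volume.restrict (Set.Icc a b)), ENNReal.ofReal (r α) = 0 := by
          filter_upwards [ae_restrict_mem measurableSet_Icc] with α hα
          rw [ENNReal.ofReal_eq_zero]
          exact (hrR α hα).trans h
        rw [lintegral_congr_ae this, lintegral_zero]
      rw [measure_univ] at hz
      exact one_ne_zero hz
  -- positivity of the odd-power difference
  have hodd : Odd (2 * k - 1) := ⟨k - 1, by omega⟩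
  have hX1 : 0 < M ^ (2 * k - 1) - m ^ (2 * k - 1) :=
    sub_pos.2 (hodd.strictMono_pow (R := ℝ) hmM)
  -- measurability of f and g w.r.t. ϱ
  have hac : ϱ ≪ volume.restrict (Set.Icc a b) := by
    rw [hϱ]; exact withDensity_absolutelyContinuous _ _
  have hfae : AEMeasurable f ϱ := (hcf.aemeasurable measurableSet_Icc).mono_ac hac
  have hgae : AEMeasurable g ϱ := (hcg.aemeasurable measurableSet_Icc).mono_ac hac
  haveI hμP : IsProbabilityMeasure (ϱ.map f) := Measure.isProbabilityMeasure_map hfae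
  haveI hνP : IsProbabilityMeasure (ϱ.map g) := Measure.isProbabilityMeasure_map hgae
  -- bound C for |f|,|g| on the interval
  set C := max |m| |M| with hCdef
  have habs : ∀ x : ℝ, x ∈ Set.Icc m M → |x| ≤ C := by
    intro x hx
    rcases abs_cases x with ⟨h1, _⟩ | ⟨h1, _⟩
    · rw [h1]
      exact (hx.2.trans (le_abs_self M)).trans (le_max_right _ _)
    · rw [h1]
      have := hx.1
      calc -x ≤ -m := by linarith
        _ ≤ |m| := neg_le_abs m
        _ ≤ C := le_max_left _ _
  -- moment bounds
  set B := R / τ * ((M ^ (2 * k - 1) - m ^ (2 * k - 1)) / (2 * (k : ℝ) - 1)) with hBdef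
  have hkR : (1 : ℝ) ≤ (k : ℝ) := by exact_mod_cast hk
  have h2k1 : (0 : ℝ) < 2 * (k : ℝ) - 1 := by linarith
  have hBpos : 0 < B := by
    apply mul_pos (div_pos hRpos hτ)
    exact div_pos hX1 h2k1
  have hmomf : ∫ α, (f α) ^ (2 * k - 2) ∂ϱ ≤ B := by
    have h := moment_bound a b hab r hr hr0 ϱ hϱ f hf hfanti τ hτ hf' (k - 1) R M m hR0 hrR hfM hfm
    have e1 : 2 * (k - 1) = 2 * k - 2 := by omega
    have e2 : 2 * k - 2 + 1 = 2 * k - 1 := by omega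
    have e3 : 2 * ((k : ℝ) - 1) + 1 = 2 * (k : ℝ) - 1 := by ring
    rw [e1, e2, Nat.cast_sub hk, Nat.cast_one, e3] at h
    exact h
  have hmomg : ∫ α, (g α) ^ (2 * k - 2) ∂ϱ ≤ B := by
    have h := moment_bound a b hab r hr hr0 ϱ hϱ g hg hganti τ hτ hg' (k - 1) R M m hR0 hrR hgM hgm
    have e1 : 2 * (k - 1) = 2 * k - 2 := by omega
    have e2 : 2 * k - 2 + 1 = 2 * k - 1 := by omega
    have e3 : 2 * ((k : ℝ) - 1) + 1 = 2 * (k : ℝ) - 1 := by ring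
    rw [e1, e2, Nat.cast_sub hk, Nat.cast_one, e3] at h
    exact h
  -- unfold the infimum
  rw [Wp]
  refine le_iInf₂ fun γ hγ => ?_
  obtain ⟨hγ1, hγ2⟩ := hγ
  haveI hγP : IsProbabilityMeasure γ := by
    constructor
    have h1 : γ.map Prod.fst Set.univ = γ Set.univ := by
      rw [Measure.map_apply measurable_fst MeasurableSet.univ, Set.preimage_univ]
    rw [← h1, hγ1]
    exact measure_univ
  -- a.e. bounds on the coupling
  have haef : ∀ᵐ z : ℝ × ℝ ∂γ, z.1 ∈ Set.Icc m M := by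
    rw [MeasureTheory.ae_iff]
    have h1 : {z : ℝ × ℝ | ¬z.1 ∈ Set.Icc m M} = Prod.fst ⁻¹' (Set.Icc m M)ᶜ := rfl
    rw [h1, ← Measure.map_apply measurable_fst measurableSet_Icc.compl, hγ1,
      Measure.map_apply_of_aemeasurable hfae measurableSet_Icc.compl]
    refine measure_mono_null ?_ hcompl
    intro α hα
    simp only [Set.mem_preimage, Set.mem_compl_iff] at hα ⊢
    intro hαs
    exact hα ⟨hfm α hαs, hfM α hαs⟩
  have haeg : ∀ᵐ z : ℝ × ℝ ∂γ, z.2 ∈ Set.Icc m M := by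
    rw [MeasureTheory.ae_iff]
    have h1 : {z : ℝ × ℝ | ¬z.2 ∈ Set.Icc m M} = Prod.snd ⁻¹' (Set.Icc m M)ᶜ := rfl
    rw [h1, ← Measure.map_apply measurable_snd measurableSet_Icc.compl, hγ2,
      Measure.map_apply_of_aemeasurable hgae measurableSet_Icc.compl]
    refine measure_mono_null ?_ hcompl
    intro α hα
    simp only [Set.mem_preimage, Set.mem_compl_iff] at hα ⊢
    intro hαs
    exact hα ⟨hgm α hαs, hgM α hαs⟩
  -- moment transfer
  have hmom1 : ∫ z : ℝ × ℝ, (z.1) ^ k ∂γ = ∫ α, (f α) ^ k ∂ϱ := by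
    have e1 : ∫ x, x ^ k ∂(γ.map Prod.fst) = ∫ z : ℝ × ℝ, (z.1) ^ k ∂γ :=
      integral_map measurable_fst.aemeasurable (continuous_pow k).aestronglyMeasurable
    have e2 : ∫ x, x ^ k ∂(ϱ.map f) = ∫ α, (f α) ^ k ∂ϱ :=
      integral_map hfae (continuous_pow k).aestronglyMeasurable
    rw [← e1, hγ1, e2]
  have hmom2 : ∫ z : ℝ × ℝ, (z.2) ^ k ∂γ = ∫ α, (g α) ^ k ∂ϱ := by
    have e1 : ∫ x, x ^ k ∂(γ.map Prod.snd) = ∫ z : ℝ × ℝ, (z.2) ^ k ∂γ :=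
      integral_map measurable_snd.aemeasurable (continuous_pow k).aestronglyMeasurable
    have e2 : ∫ x, x ^ k ∂(ϱ.map g) = ∫ α, (g α) ^ k ∂ϱ :=
      integral_map hgae (continuous_pow k).aestronglyMeasurable
    rw [← e1, hγ2, e2]
  -- integrability over γ
  have hint1 : Integrable (fun z : ℝ × ℝ => (z.1) ^ k) γ := by
    refine Integrable.mono' (integrable_const (C ^ k))
      ((measurable_fst.pow_const k).aestronglyMeasurable) ?_
    filter_upwards [haef] with z hz
    rw [Real.norm_eq_abs, abs_pow]
    exact pow_le_pow_left₀ (abs_nonneg _) (habs _ hz) k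
  have hint2 : Integrable (fun z : ℝ × ℝ => (z.2) ^ k) γ := by
    refine Integrable.mono' (integrable_const (C ^ k))
      ((measurable_snd.pow_const k).aestronglyMeasurable) ?_
    filter_upwards [haeg] with z hz
    rw [Real.norm_eq_abs, abs_pow]
    exact pow_le_pow_left₀ (abs_nonneg _) (habs _ hz) k
  have hD : (∫ α, f α ^ k ∂ϱ) - ∫ α, g α ^ k ∂ϱ =
      ∫ z : ℝ × ℝ, ((z.1) ^ k - (z.2) ^ k) ∂γ := by
    rw [integral_sub hint1 hint2, hmom1, hmom2]
  -- helper functions on the coupling space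
  have hev : Even (2 * k - 2) := ⟨k - 1, by omega⟩
  set P : ℝ × ℝ → ℝ := fun z => ∑ i ∈ Finset.range k, z.1 ^ i * z.2 ^ (k - 1 - i) with hPdef
  have hPm : Measurable P :=
    Finset.measurable_sum _ fun i _ => (measurable_fst.pow_const i).mul (measurable_snd.pow_const _)
  set F : ℝ × ℝ → ℝ≥0∞ := fun z => ENNReal.ofReal |z.1 - z.2| with hFdef
  set Q : ℝ × ℝ → ℝ≥0∞ := fun z => ENNReal.ofReal |P z| with hQdef
  have hFm : Measurable F := (measurable_fst.sub measurable_snd).abs.ennreal_ofReal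
  have hQm : Measurable Q := hPm.abs.ennreal_ofReal
  have hintsub : Integrable (fun z : ℝ × ℝ => z.1 ^ k - z.2 ^ k) γ := hint1.sub hint2
  have stepA : ENNReal.ofReal |(∫ α, f α ^ k ∂ϱ) - ∫ α, g α ^ k ∂ϱ| ≤ ∫⁻ z, F z * Q z ∂γ := by
    rw [hD]
    have h1 : |∫ z : ℝ × ℝ, (z.1 ^ k - z.2 ^ k) ∂γ| ≤ ∫ z : ℝ × ℝ, |z.1 ^ k - z.2 ^ k| ∂γ := by
      simpa [Real.norm_eq_abs] using
        norm_integral_le_integral_norm (μ := γ) (fun z : ℝ × ℝ => z.1 ^ k - z.2 ^ k)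
    refine le_trans (ENNReal.ofReal_le_ofReal h1) ?_
    rw [ofReal_integral_eq_lintegral_ofReal hintsub.abs
      (Filter.Eventually.of_forall fun z => abs_nonneg _)]
    refine le_of_eq (lintegral_congr fun z => ?_)
    have hfact : z.1 ^ k - z.2 ^ k = P z * (z.1 - z.2) := (geom_sum₂_mul z.1 z.2 k).symm
    rw [hfact, abs_mul, ENNReal.ofReal_mul (abs_nonneg _), mul_comm]
  have hconj : Real.HolderConjugate 2 2 := Real.holderConjugate_iff.mpr ⟨one_lt_two, by norm_num⟩
  have holder := ENNReal.lintegral_mul_le_Lp_mul_Lq γ hconj hFm.aemeasurable hQm.aemeasurable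
  simp only [Pi.mul_apply] at holder
  have hI1 : ∫⁻ z : ℝ × ℝ, ENNReal.ofReal (z.1 ^ (2 * k - 2)) ∂γ =
      ENNReal.ofReal (∫ α, f α ^ (2 * k - 2) ∂ϱ) := by
    have hm : Measurable fun x : ℝ => ENNReal.ofReal (x ^ (2 * k - 2)) :=
      (measurable_id.pow_const _).ennreal_ofReal
    rw [show (∫⁻ z : ℝ × ℝ, ENNReal.ofReal (z.1 ^ (2 * k - 2)) ∂γ) =
        ∫⁻ x, ENNReal.ofReal (x ^ (2 * k - 2)) ∂(γ.map Prod.fst) from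
      (lintegral_map hm measurable_fst).symm, hγ1, lintegral_map' hm.aemeasurable hfae]
    have hintm : Integrable (fun α => f α ^ (2 * k - 2)) ϱ := by
      refine Integrable.mono' (integrable_const (C ^ (2 * k - 2)))
        ((hfae.pow_const _).aestronglyMeasurable) ?_
      filter_upwards [haes] with α hα
      rw [Real.norm_eq_abs, abs_pow]
      exact pow_le_pow_left₀ (abs_nonneg _) (habs _ ⟨hfm α hα, hfM α hα⟩) _
    rw [ofReal_integral_eq_lintegral_ofReal hintm
      (Filter.Eventually.of_forall fun α => hev.pow_nonneg _)]
  have hI2 : ∫⁻ z : ℝ × ℝ, ENNReal.ofReal (z.2 ^ (2 * k - 2)) ∂γ =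
      ENNReal.ofReal (∫ α, g α ^ (2 * k - 2) ∂ϱ) := by
    have hm : Measurable fun x : ℝ => ENNReal.ofReal (x ^ (2 * k - 2)) :=
      (measurable_id.pow_const _).ennreal_ofReal
    rw [show (∫⁻ z : ℝ × ℝ, ENNReal.ofReal (z.2 ^ (2 * k - 2)) ∂γ) =
        ∫⁻ x, ENNReal.ofReal (x ^ (2 * k - 2)) ∂(γ.map Prod.snd) from
      (lintegral_map hm measurable_snd).symm, hγ2, lintegral_map' hm.aemeasurable hgae]
    have hintm : Integrable (fun α => g α ^ (2 * k - 2)) ϱ := by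
      refine Integrable.mono' (integrable_const (C ^ (2 * k - 2)))
        ((hgae.pow_const _).aestronglyMeasurable) ?_
      filter_upwards [haes] with α hα
      rw [Real.norm_eq_abs, abs_pow]
      exact pow_le_pow_left₀ (abs_nonneg _) (habs _ ⟨hgm α hα, hgM α hα⟩) _
    rw [ofReal_integral_eq_lintegral_ofReal hintm
      (Filter.Eventually.of_forall fun α => hev.pow_nonneg _)]
  have stepC : ∫⁻ z, Q z ^ (2 : ℝ) ∂γ ≤ ENNReal.ofReal ((k : ℝ) ^ 2 * B) := by
    have hQ2 : ∀ z : ℝ × ℝ, Q z ^ (2 : ℝ) = ENNReal.ofReal ((P z) ^ 2) := by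
      intro z
      rw [hQdef]
      rw [ENNReal.ofReal_rpow_of_nonneg (abs_nonneg _) (by norm_num : (0:ℝ) ≤ 2)]
      congr 1
      rw [Real.rpow_two, sq_abs]
    calc ∫⁻ z, Q z ^ (2 : ℝ) ∂γ = ∫⁻ z, ENNReal.ofReal ((P z) ^ 2) ∂γ := lintegral_congr hQ2
      _ ≤ ∫⁻ z : ℝ × ℝ,
            ENNReal.ofReal ((k : ℝ) ^ 2 / 2 * (z.1 ^ (2 * k - 2) + z.2 ^ (2 * k - 2))) ∂γ :=
          lintegral_mono fun z => ENNReal.ofReal_le_ofReal (sum_sq_bound k hk z.1 z.2)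
      _ = ENNReal.ofReal ((k : ℝ) ^ 2 / 2) *
            ((∫⁻ z : ℝ × ℝ, ENNReal.ofReal (z.1 ^ (2 * k - 2)) ∂γ) +
              ∫⁻ z : ℝ × ℝ, ENNReal.ofReal (z.2 ^ (2 * k - 2)) ∂γ) := by
          rw [← lintegral_add_left ((measurable_fst.pow_const _).ennreal_ofReal),
            ← lintegral_const_mul _ (by fun_prop : Measurable fun z : ℝ × ℝ =>
              ENNReal.ofReal (z.1 ^ (2 * k - 2)) + ENNReal.ofReal (z.2 ^ (2 * k - 2)))]
          refine lintegral_congr fun z => ?_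
          rw [ENNReal.ofReal_mul (by positivity),
            ENNReal.ofReal_add (hev.pow_nonneg _) (hev.pow_nonneg _)]
      _ ≤ ENNReal.ofReal ((k : ℝ) ^ 2 / 2) * (ENNReal.ofReal B + ENNReal.ofReal B) := by
          refine mul_le_mul_right (add_le_add ?_ ?_) _
          · rw [hI1]; exact ENNReal.ofReal_le_ofReal hmomf
          · rw [hI2]; exact ENNReal.ofReal_le_ofReal hmomg
      _ = ENNReal.ofReal ((k : ℝ) ^ 2 * B) := by
          rw [← ENNReal.ofReal_add hBpos.le hBpos.le, ← ENNReal.ofReal_mul (by positivity)]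
          congr 1
          ring
  have stepD : (∫⁻ z, Q z ^ (2 : ℝ) ∂γ) ^ (1 / (2 : ℝ)) ≤
      ENNReal.ofReal ((k : ℝ) * Real.sqrt B) := by
    calc (∫⁻ z, Q z ^ (2 : ℝ) ∂γ) ^ (1 / (2 : ℝ))
        ≤ (ENNReal.ofReal ((k : ℝ) ^ 2 * B)) ^ (1 / (2 : ℝ)) :=
          ENNReal.rpow_le_rpow stepC (by norm_num)
      _ = ENNReal.ofReal (((k : ℝ) ^ 2 * B) ^ ((1 : ℝ) / 2)) :=
          ENNReal.ofReal_rpow_of_nonneg (by positivity) (by norm_num)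
      _ = ENNReal.ofReal ((k : ℝ) * Real.sqrt B) := by
          rw [← Real.sqrt_eq_rpow, Real.sqrt_mul (sq_nonneg _), Real.sqrt_sq (Nat.cast_nonneg k)]
  set c := Real.sqrt ((2 * k - 1 : ℕ)) / (k : ℝ) /
      Real.sqrt (M ^ (2 * k - 1) - m ^ (2 * k - 1)) * Real.sqrt τ / Real.sqrt R with hcdef
  have hc0 : 0 ≤ c := by positivity
  have hkpos : (0 : ℝ) < (k : ℝ) := by exact_mod_cast Nat.pos_of_ne_zero (by omega)
  have hc1 : c * ((k : ℝ) * Real.sqrt B) = 1 := by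
    have hcast : ((2 * k - 1 : ℕ) : ℝ) = 2 * (k : ℝ) - 1 := by
      have h12 : 1 ≤ 2 * k := by omega
      push_cast [Nat.cast_sub h12]
      ring
    have hsB : Real.sqrt B = Real.sqrt R * Real.sqrt (M ^ (2 * k - 1) - m ^ (2 * k - 1)) /
        (Real.sqrt τ * Real.sqrt (2 * (k : ℝ) - 1)) := by
      rw [show B = (Real.sqrt R * Real.sqrt (M ^ (2 * k - 1) - m ^ (2 * k - 1)) /
          (Real.sqrt τ * Real.sqrt (2 * (k : ℝ) - 1))) ^ 2 from ?_, Real.sqrt_sq (by positivity)]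
      rw [div_pow, mul_pow, mul_pow, Real.sq_sqrt hRpos.le, Real.sq_sqrt hX1.le,
        Real.sq_sqrt hτ.le, Real.sq_sqrt h2k1.le, hBdef]
      field_simp
    have h1 : Real.sqrt R ≠ 0 := ne_of_gt (Real.sqrt_pos.2 hRpos)
    have h2 : Real.sqrt (M ^ (2 * k - 1) - m ^ (2 * k - 1)) ≠ 0 := ne_of_gt (Real.sqrt_pos.2 hX1)
    have h3 : Real.sqrt τ ≠ 0 := ne_of_gt (Real.sqrt_pos.2 hτ)
    have h4 : Real.sqrt (2 * (k : ℝ) - 1) ≠ 0 := ne_of_gt (Real.sqrt_pos.2 h2k1)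
    rw [hcdef, hsB, hcast]
    field_simp
  calc ENNReal.ofReal (c * |(∫ α, f α ^ k ∂ϱ) - ∫ α, g α ^ k ∂ϱ|)
      = ENNReal.ofReal c * ENNReal.ofReal |(∫ α, f α ^ k ∂ϱ) - ∫ α, g α ^ k ∂ϱ| :=
        ENNReal.ofReal_mul hc0
    _ ≤ ENNReal.ofReal c * ∫⁻ z, F z * Q z ∂γ := mul_le_mul_right stepA _
    _ ≤ ENNReal.ofReal c * ((∫⁻ z, F z ^ (2 : ℝ) ∂γ) ^ (1 / (2 : ℝ)) *
          (∫⁻ z, Q z ^ (2 : ℝ) ∂γ) ^ (1 / (2 : ℝ))) := mul_le_mul_right holder _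
    _ ≤ ENNReal.ofReal c * ((∫⁻ z, F z ^ (2 : ℝ) ∂γ) ^ (1 / (2 : ℝ)) *
          ENNReal.ofReal ((k : ℝ) * Real.sqrt B)) :=
        mul_le_mul_right (mul_le_mul_right stepD _) _
    _ = (∫⁻ z, F z ^ (2 : ℝ) ∂γ) ^ (1 / (2 : ℝ)) *
          (ENNReal.ofReal c * ENNReal.ofReal ((k : ℝ) * Real.sqrt B)) := by ring
    _ = (∫⁻ z, F z ^ (2 : ℝ) ∂γ) ^ (1 / (2 : ℝ)) := by
        rw [← ENNReal.ofReal_mul hc0, hc1, ENNReal.ofReal_one, mul_one]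
    _ = (∫⁻ z : ℝ × ℝ, ENNReal.ofReal (|z.1 - z.2| ^ (2 : ℝ)) ∂γ) ^ (1 / (2 : ℝ)) := by
        congr 1
        refine lintegral_congr fun z => ?_
        rw [hFdef]
        rw [ENNReal.ofReal_rpow_of_nonneg (abs_nonneg _) (by norm_num : (0:ℝ) ≤ 2)]
end
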